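/- Let G be a compact group, H a closed subgroup, V a finite-dimensional unitary G-module and W a finite-dimensional unitary H-module. Then the map t sending a G-equivariant bounded linear map A : V → Ind_H^G W to the linear map a : V → W defined by a(v) = A(v)(e) is a linear isomorphism Hom_G(V, Ind_H^G W) → Hom_H(Res_H^G V, W), with inverse a ↦ A where A(v)(g) = a(g⁻¹v). -/

import Mathlib

open scoped InnerProductSpace

/-- **unitary Frobenius reciprocity.** `G` a compact group, `H` a closed
subgroup, `V` a finite-dimensional unitary `G`-module, `W` a finite-dimensional unitary
`H`-module. `Ind_H^G W` is realized as the space of (continuous-vector representatives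
of) functions `f : G → W` with `f(gh) = h⁻¹(f(g))`, with `G`-action `(g·f)(g′) = f(g⁻¹g′)`;
a `G`-map of the finite-dimensional `V` into the induced module automatically takes
values in continuous vectors, so `Hom_G(V, Ind_H^G W)` is the set `SG` below, and
`Hom_H(Res_H^G V, W)` is the set `SH` below (boundedness being automatic in finite
dimensions). The map `t : A ↦ (v ↦ A(v)(e))` is a linear bijection from
`Hom_G(V, Ind_H^G W)` onto `Hom_H(Res_H^G V, W)`, with inverse `a ↦ (v ↦ (g ↦ a(g⁻¹v)))`. -/
theorem unitary_frobenius_reciprocity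
    {G : Type*} [Group G] [TopologicalSpace G] [IsTopologicalGroup G] [CompactSpace G]
    (H : Subgroup G) (hH : IsClosed (H : Set G))
    {V W : Type*} [NormedAddCommGroup V] [InnerProductSpace ℂ V] [FiniteDimensional ℂ V]
    [NormedAddCommGroup W] [InnerProductSpace ℂ W] [FiniteDimensional ℂ W]
    (ρ : Representation ℂ G V) (σ : Representation ℂ (↥H) W)
    (hρu : ∀ (g : G) (v v' : V), ⟪ρ g v, ρ g v'⟫_ℂ = ⟪v, v'⟫_ℂ)
    (hσu : ∀ (h : ↥H) (w w' : W), ⟪σ h w, σ h w'⟫_ℂ = ⟪w, w'⟫_ℂ)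
    (hρc : Continuous fun p : G × V => ρ p.1 p.2)
    (hσc : Continuous fun p : ↥H × W => σ p.1 p.2) :
    -- the induced module (continuous vectors)
    letI Ind : Set (G → W) :=
      {f | Continuous f ∧ ∀ (g : G) (h : ↥H), f (g * ↑h) = σ h⁻¹ (f g)}
    -- Hom_G(V, Ind_H^G W)
    letI SG : Set (V →ₗ[ℂ] (G → W)) :=
      {A | (∀ v : V, A v ∈ Ind) ∧
        ∀ (g : G) (v : V), A (ρ g v) = fun g' : G => A v (g⁻¹ * g')}
    -- Hom_H(Res_H^G V, W)
    letI SH : Set (V →ₗ[ℂ] W) :=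
      {a | ∀ (h : ↥H) (v : V), a (ρ (↑h) v) = σ h (a v)}
    -- evaluation at the identity e ∈ G
    letI T : (V →ₗ[ℂ] (G → W)) → (V →ₗ[ℂ] W) := fun A =>
      { toFun := fun v => A v 1
        map_add' := by intro v v'; simp
        map_smul' := by intro c v; simp }
    Set.BijOn T SG SH ∧
      (∀ A ∈ SG, ∀ (v : V) (g : G), A v g = T A (ρ g⁻¹ v)) := by
  have key : ∀ A : V →ₗ[ℂ] (G → W),
      ((∀ v : V, Continuous (A v) ∧ ∀ (g : G) (h : ↥H), A v (g * ↑h) = σ h⁻¹ (A v g)) ∧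
        ∀ (g : G) (v : V), A (ρ g v) = fun g' : G => A v (g⁻¹ * g')) →
      ∀ (v : V) (g : G), A v g = A (ρ g⁻¹ v) 1 := by
    intro A hA v g
    have h1 := hA.2 g⁻¹ v
    have : A (ρ g⁻¹ v) 1 = A v ((g⁻¹)⁻¹ * 1) := by rw [h1]
    simp only [inv_inv, mul_one] at this
    exact this.symm
  refine ⟨⟨?_, ?_, ?_⟩, key⟩
  · -- MapsTo
    intro A hA
    intro h v
    have h1 := hA.2 (↑h : G) v
    have e1 : A (ρ (↑h) v) 1 = A v ((↑h : G)⁻¹ * 1) := by rw [h1]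
    have e2 : A v ((↑h : G)⁻¹) = σ h (A v 1) := by
      have := (hA.1 v).2 1 h⁻¹
      simpa using this
    simp only [mul_one] at e1
    show A (ρ (↑h) v) 1 = σ h (A v 1)
    rw [e1, e2]
  · -- InjOn
    intro A hA A' hA' hT
    ext v g
    have h1 := key A hA v g
    have h2 := key A' hA' v g
    rw [h1, h2]
    have := congrArg (fun B => B (ρ g⁻¹ v)) hT
    simpa using this
  · -- SurjOn
    intro a ha
    have hacont : Continuous a := a.continuous_of_finiteDimensional
    refine ⟨{ toFun := fun v => fun g => a (ρ g⁻¹ v)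
              map_add' := by intro v v'; funext g; simp
              map_smul' := by intro c v; funext g; simp }, ⟨?_, ?_⟩, ?_⟩
    · intro v
      constructor
      · exact hacont.comp (hρc.comp ((continuous_inv).prodMk continuous_const))
      · intro g h
        simp only [LinearMap.coe_mk, AddHom.coe_mk, mul_inv_rev]
        have : ρ ((↑h : G)⁻¹ * g⁻¹) v = ρ ((↑(h⁻¹) : G)) (ρ g⁻¹ v) := by
          rw [map_mul]; rfl
        rw [this, ha h⁻¹ (ρ g⁻¹ v)]
    · intro g v
      funext g'
      simp only [LinearMap.coe_mk, AddHom.coe_mk]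
      have : ρ g'⁻¹ (ρ g v) = ρ ((g⁻¹ * g')⁻¹) v := by
        rw [mul_inv_rev, inv_inv, map_mul]; rfl
      rw [this]
    · ext v
      show a (ρ (1:G)⁻¹ v) = a v
      simp
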